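/- There exist no integers x, y, z₁, z₂, z₃ such that −2x² − 2y² − 2(z₁²+z₂²+z₃²) + 6xy + (4x+2y)(z₁+z₂+z₃) = −2 and 7x + 4y + z₁ + z₂ + z₃ = 0. -/
import Mathlib


/-- Lemma 4.4: no class `F` in the lattice `𝕃` with `F² = -2` and `F·C = 0`. -/
theorem stmt_6 :
    ¬ ∃ x y z₁ z₂ z₃ : ℤ,
      -2 * x ^ 2 - 2 * y ^ 2 - 2 * (z₁ ^ 2 + z₂ ^ 2 + z₃ ^ 2) + 6 * x * y
        + (4 * x + 2 * y) * (z₁ + z₂ + z₃) = -2 ∧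
      7 * x + 4 * y + z₁ + z₂ + z₃ = 0 := by
  rintro ⟨x, y, z₁, z₂, z₃, h1, h2⟩
  have h' : 30 * x ^ 2 + 10 * y ^ 2 + 24 * x * y
      + 2 * (z₁ ^ 2 + z₂ ^ 2 + z₃ ^ 2) = 2 := by
    linear_combination -h1 + (4 * x + 2 * y) * h2
  have hx : x = 0 := by
    by_contra hx
    have h1x : 1 ≤ x ^ 2 := by
      rcases lt_or_gt_of_ne hx with h | h <;> nlinarith
    nlinarith [sq_nonneg (6 * x + 5 * y), sq_nonneg z₁, sq_nonneg z₂, sq_nonneg z₃]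
  subst hx
  have hy : y = 0 := by
    by_contra hy
    have h1y : 1 ≤ y ^ 2 := by
      rcases lt_or_gt_of_ne hy with h | h <;> nlinarith
    nlinarith [sq_nonneg z₁, sq_nonneg z₂, sq_nonneg z₃]
  subst hy
  have hsq : z₁ ^ 2 + z₂ ^ 2 + z₃ ^ 2 = 1 := by linarith
  have hsum : z₁ + z₂ + z₃ = 0 := by linarith
  have hpar : 1 + 2 * (z₁ * z₂ + z₁ * z₃ + z₂ * z₃) = 0 := by
    linear_combination (z₁ + z₂ + z₃) * hsum - hsq
  omega
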